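/- The function K^L(x) = ∏_{ℓ=1}^L sinc(2^{-ℓ}x) has Fourier transform supported in [-(1-2^{-L}), 1-2^{-L}], and F K^L(ξ) = √(2π) for all |ξ| ≤ 2^{-L}. In particular, F K^L equals √(2π) times the (L-1)-fold convolution χ_{[-1/2,1/2]} ∗ 2χ_{[-1/4,1/4]} ∗ … ∗ 2^{L-1}χ_{[-2^{-L},2^{-L}]}. -/

import Mathlib

open Real Finset MeasureTheory

/-- The normalized `sinc` function: `sin x / x` for `x ≠ 0`, and `1` at `0`. -/
noncomputable def sinc (x : ℝ) : ℝ := if x = 0 then 1 else Real.sin x / x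

/-- The kernel `K^L(x) = ∏_{ℓ=1}^L sinc(2^{-ℓ} x)`. -/
noncomputable def KL (L : ℕ) (x : ℝ) : ℝ := ∏ l ∈ Finset.Icc 1 L, _root_.sinc (x / 2 ^ l)

/-- The Fourier transform `F f(ξ) = (2π)^{-1/2} ∫ f(x) e^{-iξx} dx` of a real-valued
function on `ℝ`. -/
noncomputable def myFT (f : ℝ → ℝ) (ξ : ℝ) : ℂ :=
  (Real.sqrt (2 * Real.pi) : ℂ)⁻¹ *
    ∫ x : ℝ, (f x : ℂ) * Complex.exp (-Complex.I * ξ * x)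

/-- The dilated box function `2^{ℓ-1} χ_{[-2^{-ℓ}, 2^{-ℓ}]}`. -/
noncomputable def dilBox (l : ℕ) (t : ℝ) : ℝ :=
  2 ^ (l - 1) * Set.indicator (Set.Icc (-(2 : ℝ) ^ (-(l : ℤ))) ((2 : ℝ) ^ (-(l : ℤ)))) 1 t

/-- The iterated convolution chain: `convChain n` is the `(n+1)`-fold convolution
`χ_{[-1/2,1/2]} ∗ 2χ_{[-1/4,1/4]} ∗ … ∗ 2^n χ_{[-2^{-(n+1)}, 2^{-(n+1)}]}`. -/
noncomputable def convChain : ℕ → ℝ → ℝ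
  | 0, x => dilBox 1 x
  | (n + 1), x => ∫ y : ℝ, convChain n y * dilBox (n + 2) (x - y)

lemma abs_sinc_le_one (x : ℝ) : |_root_.sinc x| ≤ 1 := by
  unfold _root_.sinc
  split_ifs with h
  · simp
  · rw [abs_div]
    exact div_le_one_of_le₀ Real.abs_sin_le_abs (abs_nonneg x)

lemma abs_sinc_le_inv (x : ℝ) (h : x ≠ 0) : |_root_.sinc x| ≤ |x|⁻¹ := by
  unfold _root_.sinc
  rw [if_neg h, abs_div, div_eq_mul_inv]
  have h1 : |Real.sin x| ≤ 1 := abs_le.mpr ⟨Real.neg_one_le_sin x, Real.sin_le_one x⟩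
  exact mul_le_of_le_one_left (by positivity) h1

lemma sinc_nonneg_zero : _root_.sinc 0 = 1 := by simp [_root_.sinc]

lemma dilBox_eq_indicator (l : ℕ) :
    dilBox l = Set.indicator (Set.Icc (-(2 : ℝ) ^ (-(l : ℤ))) ((2 : ℝ) ^ (-(l : ℤ))))
      (fun _ => (2 : ℝ) ^ (l - 1)) := by
  funext t
  unfold dilBox
  rw [← Set.indicator_const_mul]
  simp

lemma dilBox_measurable (l : ℕ) : Measurable (dilBox l) := by
  rw [dilBox_eq_indicator]
  exact (measurable_const.indicator measurableSet_Icc)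

lemma dilBox_integrable (l : ℕ) : Integrable (dilBox l) := by
  rw [dilBox_eq_indicator]
  exact (integrable_indicator_iff measurableSet_Icc).2
    (integrableOn_const (by rw [Real.volume_Icc]; exact ENNReal.ofReal_ne_top))

lemma dilBox_nonneg (l : ℕ) (t : ℝ) : 0 ≤ dilBox l t := by
  rw [dilBox_eq_indicator]
  exact Set.indicator_nonneg (fun _ _ => by positivity) t

lemma dilBox_eq_zero (l : ℕ) {t : ℝ} (ht : (2:ℝ) ^ (-(l:ℤ)) < |t|) : dilBox l t = 0 := by
  rw [dilBox_eq_indicator]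
  apply Set.indicator_of_notMem
  intro hmem
  rw [Set.mem_Icc] at hmem
  exact absurd (abs_le.2 hmem) (not_le.2 ht)

lemma two_zpow_neg (l : ℕ) : (2:ℝ) ^ (-(l:ℤ)) = ((2:ℝ)^l)⁻¹ := by
  rw [zpow_neg, zpow_natCast]

lemma pow_mul_r (l : ℕ) (hl : 1 ≤ l) : (2:ℝ)^(l-1) * (2 * (2:ℝ) ^ (-(l:ℤ))) = 1 := by
  rw [two_zpow_neg,
    show (2:ℝ)^(l-1) * (2 * ((2:ℝ)^l)⁻¹) = ((2:ℝ)^(l-1) * 2) * ((2:ℝ)^l)⁻¹ by ring,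
    ← pow_succ, show l - 1 + 1 = l by omega, mul_inv_cancel₀ (by positivity)]

lemma box_ft (l : ℕ) (hl : 1 ≤ l) (c : ℝ) :
    ∫ t : ℝ, (dilBox l t : ℂ) * Complex.exp (c * t * Complex.I) = (_root_.sinc (c / 2 ^ l) : ℂ) := by
  have hr : (0:ℝ) < (2:ℝ) ^ (-(l:ℤ)) := by positivity
  set r : ℝ := (2:ℝ) ^ (-(l:ℤ)) with hrdef
  have hind : (fun t : ℝ => (dilBox l t : ℂ) * Complex.exp (c * t * Complex.I))
      = Set.indicator (Set.Icc (-r) r)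
        (fun t : ℝ => (((2:ℝ)^(l-1) : ℝ) : ℂ) * Complex.exp (c * t * Complex.I)) := by
    funext t
    rw [dilBox_eq_indicator]
    by_cases ht : t ∈ Set.Icc (-r) r
    · rw [Set.indicator_of_mem ht, Set.indicator_of_mem ht]
    · rw [Set.indicator_of_notMem ht, Set.indicator_of_notMem ht]; simp
  rw [hind, MeasureTheory.integral_indicator measurableSet_Icc,
    MeasureTheory.integral_Icc_eq_integral_Ioc,
    ← intervalIntegral.integral_of_le (by linarith : -r ≤ r),
    intervalIntegral.integral_const_mul]
  by_cases hc : c = 0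
  · subst hc
    simp only [Complex.ofReal_zero, zero_mul, Complex.exp_zero, intervalIntegral.integral_const,
      smul_eq_mul, mul_one, sub_neg_eq_add]
    rw [show ((0:ℝ)/2^l) = 0 by ring, sinc_nonneg_zero]
    have : (r + r : ℝ) = 2 * r := by ring
    rw [this, Complex.real_smul, mul_one]
    norm_cast
    push_cast
    exact pow_mul_r l hl
  · have h2 : (fun t : ℝ => Complex.exp (c * t * Complex.I))
        = fun t : ℝ => Complex.exp ((c * Complex.I) * t) := by
      funext t; ring_nf
    rw [h2, integral_exp_mul_complex (mul_ne_zero (Complex.ofReal_ne_zero.2 hc) Complex.I_ne_zero)]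
    have ha : (↑c * Complex.I) * (↑r : ℂ) = ((c * r : ℝ) : ℂ) * Complex.I := by push_cast; ring
    have hb : (↑c * Complex.I) * ((-r : ℝ) : ℂ) = ((-(c * r) : ℝ) : ℂ) * Complex.I := by
      push_cast; ring
    rw [ha, hb, Complex.exp_mul_I, Complex.exp_mul_I]
    have hcr : c / 2^l = c * r := by rw [hrdef, two_zpow_neg]; ring
    have hcr0 : c / 2^l ≠ 0 := by
      rw [hcr]; exact mul_ne_zero hc (by positivity)
    rw [hcr]
    unfold _root_.sinc
    rw [if_neg (hcr ▸ hcr0)]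
    push_cast
    rw [Complex.cos_neg, Complex.sin_neg]
    have h2l : ((2:ℂ)^(l-1) * 2) = (2:ℂ)^l := by
      rw [← pow_succ, show l - 1 + 1 = l by omega]
    have hrc : (r : ℂ) = ((2:ℂ)^l)⁻¹ := by
      rw [hrdef, two_zpow_neg]; push_cast; ring
    have hce : (c:ℂ) ≠ 0 := Complex.ofReal_ne_zero.2 hc
    have h2le : ((2:ℂ)^l) ≠ 0 := pow_ne_zero _ two_ne_zero
    set θ : ℂ := (c:ℂ) * (r:ℂ) with hθ
    have hnum : Complex.cos θ + Complex.sin θ * Complex.I -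
        (Complex.cos θ + -Complex.sin θ * Complex.I) = 2 * Complex.sin θ * Complex.I := by ring
    rw [hnum]
    have hstep : (2:ℂ)^(l-1) * (2 * Complex.sin θ * Complex.I / (↑c * Complex.I)) =
        (2:ℂ)^l * Complex.sin θ / c := by
      rw [← h2l]; field_simp
    rw [hstep, hθ, hrc]
    field_simp

noncomputable def rad (l : ℕ) : ℝ := (2:ℝ) ^ (-(l : ℤ))

lemma rad_pos (l : ℕ) : 0 < rad l := by unfold rad; positivity

lemma rad_two (l : ℕ) : 2 * rad (l + 1) = rad l := by
  unfold rad
  rw [show (-(((l:ℕ)+1:ℕ)):ℤ) = (-(l:ℤ)) + (-1) by push_cast; ring, zpow_add₀ (two_ne_zero)]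
  simp
  ring

lemma rad_le_one (l : ℕ) : rad l ≤ 1 := by
  unfold rad
  rw [show ((1:ℝ)) = (2:ℝ)^(0:ℤ) by simp]
  apply zpow_le_zpow_right₀ one_le_two
  omega

lemma pow_mul_rad (l : ℕ) (hl : 1 ≤ l) : (2:ℝ)^(l-1) * (2 * rad l) = 1 := pow_mul_r l hl

lemma dilBox_rad_eq_indicator (l : ℕ) :
    dilBox l = Set.indicator (Set.Icc (-(rad l)) (rad l)) (fun _ => (2 : ℝ) ^ (l - 1)) :=
  dilBox_eq_indicator l

lemma dilBox_rad_eq_zero (l : ℕ) {t : ℝ} (ht : rad l < |t|) : dilBox l t = 0 :=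
  dilBox_eq_zero l ht

lemma convChain_zero_def : convChain 0 = dilBox 1 := rfl

lemma convChain_succ_def (n : ℕ) (x : ℝ) :
    convChain (n+1) x = ∫ y : ℝ, convChain n y * dilBox (n + 2) (x - y) := rfl

lemma convChain_integrable (n : ℕ) : Integrable (convChain n) := by
  induction n with
  | zero => exact dilBox_integrable 1
  | succ n ih =>
    have h := ih.integrable_convolution (ContinuousLinearMap.lsmul ℝ ℝ) (dilBox_integrable (n+2))
    have he : convChain (n+1) = (convolution (convChain n) (dilBox (n+2))
        (ContinuousLinearMap.lsmul ℝ ℝ) volume) := by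
      funext x
      rw [convChain_succ_def]
      simp [MeasureTheory.convolution, ContinuousLinearMap.lsmul_apply, smul_eq_mul]
    rw [he]
    exact h

lemma convChain_succ_interval (n : ℕ) (x : ℝ) :
    convChain (n+1) x
      = 2^(n+1) * ∫ y in Set.Icc (x - rad (n+2)) (x + rad (n+2)), convChain n y := by
  rw [convChain_succ_def]
  set r : ℝ := rad (n+2) with hrdef
  have key : ∀ y : ℝ, convChain n y * dilBox (n+2) (x - y)
      = 2^(n+1) * Set.indicator (Set.Icc (x - r) (x + r)) (convChain n) y := by
    intro y
    rw [dilBox_rad_eq_indicator]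
    by_cases hy : y ∈ Set.Icc (x - r) (x + r)
    · rw [Set.indicator_of_mem hy]
      have hmem : x - y ∈ Set.Icc (-(rad (n+2))) (rad (n+2)) := by
        rw [Set.mem_Icc] at hy ⊢
        constructor <;> [linarith [hy.2]; linarith [hy.1]]
      rw [Set.indicator_of_mem hmem]
      rw [show ((n:ℕ)+2) - 1 = n + 1 by omega]
      ring
    · rw [Set.indicator_of_notMem hy]
      have hmem : x - y ∉ Set.Icc (-(rad (n+2))) (rad (n+2)) := by
        rw [Set.mem_Icc] at hy ⊢
        intro ⟨h1, h2⟩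
        exact hy ⟨by linarith, by linarith⟩
      rw [Set.indicator_of_notMem hmem]
      ring
  simp_rw [key]
  rw [MeasureTheory.integral_const_mul, MeasureTheory.integral_indicator measurableSet_Icc]

lemma convChain_one (n : ℕ) : ∀ x : ℝ, |x| ≤ rad (n+1) → convChain n x = 1 := by
  induction n with
  | zero =>
    intro x hx
    rw [convChain_zero_def, dilBox_rad_eq_indicator]
    have h2 : 2 * rad 1 = rad 0 := rad_two 0
    have h0 : rad 0 = 1 := by unfold rad; simp
    have hx' : x ∈ Set.Icc (-(rad 1)) (rad 1) := by
      rw [Set.mem_Icc]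
      exact ⟨neg_le_of_abs_le hx, le_of_abs_le hx⟩
    rw [Set.indicator_of_mem hx']
    norm_num
  | succ n ih =>
    intro x hx
    rw [convChain_succ_interval]
    have hrpos := rad_pos (n+2)
    have hr2 : 2 * rad (n+2) = rad (n+1) := rad_two (n+1)
    have heq : Set.EqOn (convChain n) (fun _ => (1:ℝ))
        (Set.Icc (x - rad (n+2)) (x + rad (n+2))) := by
      intro y hy
      rw [Set.mem_Icc] at hy
      apply ih
      have hax : |x| ≤ rad (n+2) := hx
      rw [abs_le] at hax ⊢
      constructor <;> [linarith [hy.1]; linarith [hy.2]]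
    rw [MeasureTheory.setIntegral_congr_fun measurableSet_Icc heq]
    rw [MeasureTheory.setIntegral_const, Real.volume_real_Icc, smul_eq_mul, mul_one]
    rw [max_eq_left (by linarith)]
    rw [show x + rad (n+2) - (x - rad (n+2)) = 2 * rad (n+2) by ring]
    exact pow_mul_rad (n+2) (by omega)

lemma convChain_zero_strict (n : ℕ) : ∀ x : ℝ, 1 - rad (n+1) < |x| → convChain n x = 0 := by
  induction n with
  | zero =>
    intro x hx
    apply dilBox_rad_eq_zero 1
    have h2 : 2 * rad 1 = rad 0 := rad_two 0
    have h0 : rad 0 = 1 := by unfold rad; simp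
    linarith
  | succ n ih =>
    intro x hx
    rw [convChain_succ_def]
    rw [show (0:ℝ) = ∫ (_ : ℝ), (0:ℝ) by simp]
    congr 1
    funext y
    by_cases hd : rad (n+2) < |x - y|
    · rw [dilBox_rad_eq_zero _ hd, mul_zero]
    · push_neg at hd
      rw [ih y ?_, zero_mul]
      have h2 : 2 * rad (n+2) = rad (n+1) := rad_two (n+1)
      have : |x| - |x - y| ≤ |y| := by
        have := abs_sub_abs_le_abs_sub x y
        linarith [abs_sub_comm x y ▸ this]
      linarith

lemma convChain_zero (n : ℕ) : ∀ x : ℝ, 1 - rad (n+2) ≤ |x| → convChain (n+1) x = 0 := by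
  intro x hx
  rw [convChain_succ_def]
  set r : ℝ := rad (n+2) with hrdef
  have h2 : 2 * rad (n+2) = rad (n+1) := rad_two (n+1)
  apply MeasureTheory.integral_eq_zero_of_ae
  have hnull : volume ({x - r, x + r} : Set ℝ) = 0 := by
    apply Set.Finite.measure_zero
    exact (Set.finite_singleton _).insert _
  have hsub : {y : ℝ | ¬ convChain n y * dilBox (n+2) (x - y) = 0}
      ⊆ ({x - r, x + r} : Set ℝ) := by
    intro y hy
    simp only [Set.mem_setOf_eq] at hy
    by_contra hmem
    simp only [Set.mem_insert_iff, Set.mem_singleton_iff] at hmem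
    push_neg at hmem
    apply hy
    by_cases hd : r < |x - y|
    · rw [dilBox_rad_eq_zero _ hd, mul_zero]
    · push_neg at hd
      have hne : |x - y| ≠ r := by
        intro h
        rcases (abs_eq (le_of_lt (rad_pos (n+2)))).1 h with h1 | h1
        · exact hmem.1 (by linarith)
        · exact hmem.2 (by linarith)
      have hlt : |x - y| < r := lt_of_le_of_ne hd hne
      rw [convChain_zero_strict n y ?_, zero_mul]
      have habs := abs_sub_abs_le_abs_sub x y
      linarith
  exact (MeasureTheory.ae_iff).2 (MeasureTheory.measure_mono_null hsub hnull)

lemma convChain_continuous (n : ℕ) : Continuous (convChain (n+1)) := by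
  have hint := convChain_integrable n
  have hF : Continuous (fun a : ℝ => ∫ y in (0:ℝ)..a, convChain n y) :=
    hint.continuous_primitive 0
  have hr := rad_pos (n+2)
  have heq : convChain (n+1) = fun x =>
      2^(n+1) * ((∫ y in (0:ℝ)..(x + rad (n+2)), convChain n y)
        - ∫ y in (0:ℝ)..(x - rad (n+2)), convChain n y) := by
    funext x
    rw [convChain_succ_interval]
    congr 1
    rw [MeasureTheory.integral_Icc_eq_integral_Ioc,
      ← intervalIntegral.integral_of_le (by linarith : x - rad (n+2) ≤ x + rad (n+2))]
    rw [intervalIntegral.integral_interval_sub_left hint.intervalIntegrable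
      hint.intervalIntegrable]
  rw [heq]
  exact continuous_const.mul ((hF.comp (continuous_id.add continuous_const)).sub
    (hF.comp (continuous_id.sub continuous_const)))

lemma KL_succ (L : ℕ) (x : ℝ) : KL (L+1) x = KL L x * _root_.sinc (x / 2^(L+1)) := by
  unfold KL
  rw [Finset.prod_Icc_succ_top (by omega : 1 ≤ L + 1)]

lemma exp_norm_one (c y : ℝ) : ‖Complex.exp (c * y * Complex.I)‖ = 1 := by
  rw [show ((c:ℂ) * y * Complex.I) = ((c*y : ℝ):ℂ) * Complex.I by push_cast; ring]
  rw [Complex.norm_exp_ofReal_mul_I]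

lemma exp_measurable (c : ℝ) : AEStronglyMeasurable
    (fun y : ℝ => Complex.exp (c * y * Complex.I)) volume := by
  apply Continuous.aestronglyMeasurable
  fun_prop

lemma integrable_mul_exp {f : ℝ → ℝ} (hf : Integrable f) (c : ℝ) :
    Integrable (fun y : ℝ => (f y : ℂ) * Complex.exp (c * y * Complex.I)) := by
  have h := MeasureTheory.Integrable.bdd_mul (f := fun y : ℝ => Complex.exp (c * y * Complex.I))
    hf.ofReal (exp_measurable c) (Filter.Eventually.of_forall fun x => le_of_eq (exp_norm_one c x))
  exact h.congr (Filter.Eventually.of_forall (fun y => mul_comm _ _))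

lemma convChain_ft (n : ℕ) (c : ℝ) :
    ∫ t : ℝ, (convChain n t : ℂ) * Complex.exp (c * t * Complex.I) = (KL (n+1) c : ℂ) := by
  induction n with
  | zero =>
    rw [convChain_zero_def, box_ft 1 le_rfl c]
    unfold KL
    rw [Finset.Icc_self, Finset.prod_singleton]
  | succ n ih =>
    set A : ℝ → ℂ := fun y => (convChain n y : ℂ) * Complex.exp (c * y * Complex.I) with hA
    set B : ℝ → ℂ := fun s => (dilBox (n+2) s : ℂ) * Complex.exp (c * s * Complex.I) with hB
    have key : ∀ t : ℝ, (convChain (n+1) t : ℂ) * Complex.exp (c * t * Complex.I)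
        = ∫ y : ℝ, A y * B (t - y) := by
      intro t
      rw [convChain_succ_def,
        show ((∫ y : ℝ, convChain n y * dilBox (n+2) (t - y) : ℝ) : ℂ)
          = ∫ y : ℝ, ((convChain n y * dilBox (n+2) (t - y) : ℝ) : ℂ) from integral_ofReal.symm,
        ← MeasureTheory.integral_mul_const]
      congr 1
      funext y
      rw [hA, hB]
      have hexp : Complex.exp (c * y * Complex.I) * Complex.exp (c * (t - y) * Complex.I)
          = Complex.exp (c * t * Complex.I) := by
        rw [← Complex.exp_add]; congr 1; push_cast; ring
      push_cast at hexp ⊢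
      linear_combination (-(((convChain n y : ℝ):ℂ)) * ((dilBox (n+2) (t - y) : ℝ):ℂ)) * hexp
    simp_rw [key]
    have hInt : Integrable (Function.uncurry (fun t y : ℝ => A y * B (t - y)))
        (volume.prod volume) := by
      have hA' : Integrable A := integrable_mul_exp (convChain_integrable n) c
      have hB' : Integrable B := integrable_mul_exp (dilBox_integrable (n+2)) c
      have h := hA'.convolution_integrand (ContinuousLinearMap.mul ℂ ℂ) hB'
      exact h.congr (Filter.Eventually.of_forall (fun p => rfl))
    rw [MeasureTheory.integral_integral_swap hInt]
    have inner : ∀ y : ℝ, (∫ t : ℝ, A y * B (t - y)) = A y * (_root_.sinc (c / 2^(n+2)) : ℂ) := by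
      intro y
      rw [MeasureTheory.integral_const_mul]
      congr 1
      rw [MeasureTheory.integral_sub_right_eq_self B y]
      exact box_ft (n+2) (by omega) c
    simp_rw [inner]
    rw [MeasureTheory.integral_mul_const, ih]
    norm_cast
    conv_rhs => rw [KL_succ (n+1) c]
    push_cast
    ring

lemma sinc_measurable : Measurable _root_.sinc := by
  unfold _root_.sinc
  exact Measurable.ite (measurableSet_eq) measurable_const
    (Real.measurable_sin.div measurable_id)

lemma KL_measurable (L : ℕ) : Measurable (KL L) := by
  unfold KL
  apply Finset.measurable_prod
  intro l _
  exact sinc_measurable.comp (measurable_id.div_const _)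

lemma KL_abs_le_one (L : ℕ) (x : ℝ) : |KL L x| ≤ 1 := by
  unfold KL
  rw [Finset.abs_prod]
  exact Finset.prod_le_one (fun l _ => abs_nonneg _) (fun l _ => _root_.abs_sinc_le_one _)

lemma KL_bound (L : ℕ) (hL : 2 ≤ L) (x : ℝ) : |KL L x| ≤ 9 * (1 + x^2)⁻¹ := by
  have h1 : |KL L x| ≤ 1 := KL_abs_le_one L x
  have h2 : x^2 * |KL L x| ≤ 8 := by
    by_cases hx : x = 0
    · simp [hx]
    · have hsub : ({1, 2} : Finset ℕ) ⊆ Finset.Icc 1 L := by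
        intro i hi
        simp only [Finset.mem_insert, Finset.mem_singleton] at hi
        rw [Finset.mem_Icc]
        rcases hi with h | h <;> omega
      have hmain : |KL L x| ≤ |_root_.sinc (x/2^(1:ℕ))| * |_root_.sinc (x/2^(2:ℕ))| := by
        unfold KL
        rw [Finset.abs_prod, ← Finset.prod_sdiff hsub]
        have hpair : ∏ l ∈ ({1, 2} : Finset ℕ), |_root_.sinc (x / 2^l)|
            = |_root_.sinc (x/2^(1:ℕ))| * |_root_.sinc (x/2^(2:ℕ))| := by
          rw [Finset.prod_pair (by norm_num)]
        rw [← hpair]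
        apply mul_le_of_le_one_left (Finset.prod_nonneg (fun l _ => abs_nonneg _))
        exact Finset.prod_le_one (fun l _ => abs_nonneg _) (fun l _ => _root_.abs_sinc_le_one _)
      have e1 : |_root_.sinc (x/2^(1:ℕ))| ≤ |x/2^(1:ℕ)|⁻¹ :=
        abs_sinc_le_inv _ (div_ne_zero hx (by norm_num))
      have e2 : |_root_.sinc (x/2^(2:ℕ))| ≤ |x/2^(2:ℕ)|⁻¹ :=
        abs_sinc_le_inv _ (div_ne_zero hx (by norm_num))
      have hprod : |_root_.sinc (x/2^(1:ℕ))| * |_root_.sinc (x/2^(2:ℕ))| ≤ |x/2^(1:ℕ)|⁻¹ * |x/2^(2:ℕ)|⁻¹ :=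
        mul_le_mul e1 e2 (abs_nonneg _) (by positivity)
      have hval : x^2 * (|x/2^(1:ℕ)|⁻¹ * |x/2^(2:ℕ)|⁻¹) = 8 := by
        rw [abs_div, abs_div, abs_of_nonneg (by positivity : (0:ℝ) ≤ (2:ℝ)^(1:ℕ)),
          abs_of_nonneg (by positivity : (0:ℝ) ≤ (2:ℝ)^(2:ℕ))]
        have hxa : |x| ≠ 0 := abs_ne_zero.2 hx
        field_simp
        rw [sq_abs]
        norm_num
      calc x^2 * |KL L x| ≤ x^2 * (|_root_.sinc (x/2^(1:ℕ))| * |_root_.sinc (x/2^(2:ℕ))|) := by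
            apply mul_le_mul_of_nonneg_left hmain (by positivity)
        _ ≤ x^2 * (|x/2^(1:ℕ)|⁻¹ * |x/2^(2:ℕ)|⁻¹) := by
            apply mul_le_mul_of_nonneg_left hprod (by positivity)
        _ = 8 := hval
  rw [show (9:ℝ) * (1+x^2)⁻¹ = 9/(1+x^2) by ring, le_div_iff₀ (by positivity)]
  nlinarith [h1, h2]

lemma KL_integrable (L : ℕ) (hL : 2 ≤ L) : Integrable (KL L) := by
  apply MeasureTheory.Integrable.mono' (integrable_inv_one_add_sq.const_mul 9)
    (KL_measurable L).aestronglyMeasurable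
  exact Filter.Eventually.of_forall (fun x => by
    simpa [Real.norm_eq_abs] using KL_bound L hL x)

open scoped FourierTransform

lemma inv_ft_eq (n : ℕ) (v : ℝ) :
    𝓕⁻ (fun t : ℝ => (convChain n t : ℂ)) v = ((KL (n+1) (2 * π * v) : ℝ) : ℂ) := by
  rw [Real.fourierInv_eq', ← convChain_ft n (2 * π * v)]
  congr 1
  funext t
  rw [smul_eq_mul, mul_comm]
  congr 2
  simp only [RCLike.inner_apply, conj_trivial]
  push_cast
  ring

lemma ft_eq (n : ℕ) (v : ℝ) :
    𝓕 (fun t : ℝ => (convChain n t : ℂ)) v = ((KL (n+1) (-(2 * π) * v) : ℝ) : ℂ) := by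
  have h := Real.fourierInv_eq_fourier_neg (fun t : ℝ => (convChain n t : ℂ)) (-v)
  rw [neg_neg] at h
  rw [← h, inv_ft_eq]
  norm_num

lemma main_identity (m : ℕ) (ξ : ℝ) :
    myFT (KL (m+2)) ξ = (Real.sqrt (2 * Real.pi) : ℂ) * (convChain (m + 1) ξ : ℂ) := by
  set F : ℝ → ℂ := fun t => (convChain (m+1) t : ℂ) with hF
  have hFcont : Continuous F := Complex.continuous_ofReal.comp (convChain_continuous m)
  have hFint : Integrable F := (convChain_integrable (m+1)).ofReal
  have hKLint : Integrable (KL (m+2)) := KL_integrable (m+2) (by omega)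
  have hFTint : Integrable (𝓕 F) := by
    have he : 𝓕 F = fun w : ℝ => ((KL (m+2) (-(2*π) * w) : ℝ) : ℂ) := funext (ft_eq (m+1))
    rw [he]
    have hne : (-(2*π) : ℝ) ≠ 0 := by
      have := Real.pi_pos; intro h; nlinarith
    exact (hKLint.comp_mul_left' hne).ofReal
  have hinv : 𝓕 (𝓕⁻ F) ξ = F ξ :=
    hFint.fourier_fourierInv_eq hFTint hFcont.continuousAt
  unfold myFT
  have hcomp : (∫ x : ℝ, (KL (m+2) ((2*π) * x) : ℂ) * Complex.exp (-Complex.I * ξ * ((2*π) * x)))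
      = 𝓕 (𝓕⁻ F) ξ := by
    rw [Real.fourier_eq']
    congr 1
    funext x
    rw [inv_ft_eq (m+1) x, smul_eq_mul, mul_comm]
    congr 1
    congr 1
    simp only [RCLike.inner_apply, conj_trivial]
    push_cast
    ring
  have hsub : (∫ x : ℝ, (KL (m+2) x : ℂ) * Complex.exp (-Complex.I * ξ * x))
      = ((2*π : ℝ)) • ∫ x : ℝ, (KL (m+2) ((2*π) * x) : ℂ)
          * Complex.exp (-Complex.I * ξ * ((2*π) * x)) := by
    have h1 := MeasureTheory.Measure.integral_comp_mul_left
      (fun y : ℝ => (KL (m+2) y : ℂ) * Complex.exp (-Complex.I * ξ * y)) (2*π)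
    push_cast at h1
    rw [h1, smul_smul]
    have hple : |(2*π : ℝ)⁻¹| = (2*π)⁻¹ := abs_of_pos (by positivity)
    rw [hple, mul_inv_cancel₀ (by positivity : (2*π : ℝ) ≠ 0), one_smul]
  rw [hsub, hcomp, hinv, hF]
  rw [Complex.real_smul]
  set s : ℂ := ((Real.sqrt (2*π) : ℝ) : ℂ) with hsdef
  have hs : s * s = ((2*π : ℝ) : ℂ) := by
    rw [hsdef]
    norm_cast
    exact Real.mul_self_sqrt (by positivity)
  have hsne : s ≠ 0 := by
    rw [hsdef]
    have : (0:ℝ) < Real.sqrt (2*π) := Real.sqrt_pos.2 (by positivity)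
    exact_mod_cast ne_of_gt this
  rw [← hs]
  field_simp

theorem fourier_transform_KL (L : ℕ) (hL : 2 ≤ L) :
    (∀ ξ : ℝ, 1 - (2 : ℝ) ^ (-(L : ℤ)) ≤ |ξ| → myFT (KL L) ξ = 0) ∧
    (∀ ξ : ℝ, |ξ| ≤ (2 : ℝ) ^ (-(L : ℤ)) →
        myFT (KL L) ξ = (Real.sqrt (2 * Real.pi) : ℂ)) ∧
    (∀ ξ : ℝ, myFT (KL L) ξ = (Real.sqrt (2 * Real.pi) : ℂ) * (convChain (L - 1) ξ : ℂ)) := by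
  obtain ⟨m, rfl⟩ : ∃ m, L = m + 2 := ⟨L - 2, by omega⟩
  have hrad : (2:ℝ) ^ (-((m + 2 : ℕ) : ℤ)) = rad (m+2) := rfl
  refine ⟨?_, ?_, ?_⟩
  · intro ξ hξ
    rw [main_identity m ξ, convChain_zero m ξ (hrad ▸ hξ), Complex.ofReal_zero, mul_zero]
  · intro ξ hξ
    rw [main_identity m ξ, convChain_one (m+1) ξ (hrad ▸ hξ), Complex.ofReal_one, mul_one]
  · intro ξ
    exact main_identity m ξ
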